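/- Let S_1, S_2, S_3 be finite sets of positive integers such that every element of S_1 is strictly smaller than every element of S_2, and every element of S_2 is strictly smaller than every element of S_3. If |S_1| - |S_2| + |S_3| = 0, Σ_{t∈S_1} t - Σ_{t∈S_2} t + Σ_{t∈S_3} t = 0, and Σ_{t∈S_1} t² - Σ_{t∈S_2} t² + Σ_{t∈S_3} t² = 0, then S_1, S_2, and S_3 are all empty. -/

import Mathlib

lemma aux_sum_lt (A B : Finset ℕ) (hB : B.Nonempty) (hc : A.card = B.card)
    (h : ∀ a ∈ A, ∀ b ∈ B, a < b) : (∑ a ∈ A, (a : ℤ)) < ∑ b ∈ B, (b : ℤ) := by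
  set m := B.min' hB with hmdef
  have hm : m ∈ B := B.min'_mem hB
  have h1 : (∑ a ∈ A, (a : ℤ)) ≤ A.card * ((m : ℤ) - 1) := by
    calc (∑ a ∈ A, (a : ℤ)) ≤ ∑ _a ∈ A, ((m : ℤ) - 1) :=
          Finset.sum_le_sum (fun a ha => by have := h a ha m hm; omega)
      _ = A.card * ((m : ℤ) - 1) := by simp [Finset.sum_const, mul_comm]; ring
  have h2 : (B.card : ℤ) * m ≤ ∑ b ∈ B, (b : ℤ) := by
    calc (B.card : ℤ) * m = ∑ _b ∈ B, (m : ℤ) := by simp [Finset.sum_const, mul_comm]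
      _ ≤ ∑ b ∈ B, (b : ℤ) :=
          Finset.sum_le_sum (fun b hb => by exact_mod_cast B.min'_le b hb)
  have hcpos : 0 < B.card := Finset.card_pos.2 hB
  have hcc : (A.card : ℤ) = B.card := by exact_mod_cast hc
  have hcpos' : (0:ℤ) < B.card := by exact_mod_cast hcpos
  nlinarith [h1, h2]

lemma aux_poly (S : Finset ℕ) (a b c : ℤ) :
    (∑ j ∈ S, (a * (j : ℤ) ^ 2 + b * (j : ℤ) + c))
      = a * (∑ j ∈ S, (j : ℤ) ^ 2) + b * (∑ j ∈ S, (j : ℤ)) + c * S.card := by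
  rw [Finset.sum_add_distrib, Finset.sum_add_distrib, ← Finset.mul_sum, ← Finset.mul_sum,
    Finset.sum_const, nsmul_eq_mul]
  ring

theorem stmt7 (S1 S2 S3 : Finset ℕ)
    (hp1 : ∀ a ∈ S1, 0 < a) (hp2 : ∀ a ∈ S2, 0 < a) (hp3 : ∀ a ∈ S3, 0 < a)
    (h12 : ∀ a ∈ S1, ∀ b ∈ S2, a < b)
    (h23 : ∀ b ∈ S2, ∀ c ∈ S3, b < c)
    (hcard : (S1.card : ℤ) - (S2.card : ℤ) + (S3.card : ℤ) = 0)
    (hsum : (∑ t ∈ S1, (t : ℤ)) - (∑ t ∈ S2, (t : ℤ)) + (∑ t ∈ S3, (t : ℤ)) = 0)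
    (hsq : (∑ t ∈ S1, (t : ℤ) ^ 2) - (∑ t ∈ S2, (t : ℤ) ^ 2) +
      (∑ t ∈ S3, (t : ℤ) ^ 2) = 0) :
    S1 = ∅ ∧ S2 = ∅ ∧ S3 = ∅ := by
  rcases Finset.eq_empty_or_nonempty S2 with h2e | h2ne
  · subst h2e
    simp only [Finset.card_empty, Nat.cast_zero] at hcard
    have h1 : S1.card = 0 ∧ S3.card = 0 := by constructor <;> omega
    exact ⟨Finset.card_eq_zero.1 h1.1, rfl, Finset.card_eq_zero.1 h1.2⟩
  · exfalso
    rcases Finset.eq_empty_or_nonempty S1 with h1e | h1ne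
    · subst h1e
      simp only [Finset.card_empty, Nat.cast_zero, Finset.sum_empty] at hcard hsum
      have hc : S2.card = S3.card := by omega
      have h3ne : S3.Nonempty := by
        rw [← Finset.card_pos, ← hc, Finset.card_pos]; exact h2ne
      have := aux_sum_lt S2 S3 h3ne hc h23
      omega
    rcases Finset.eq_empty_or_nonempty S3 with h3e | h3ne
    · subst h3e
      simp only [Finset.card_empty, Nat.cast_zero, Finset.sum_empty] at hcard hsum
      have hc : S1.card = S2.card := by omega
      have := aux_sum_lt S1 S2 h2ne hc h12
      omega
    -- all three nonempty: Vandermonde triple sum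
    set N1 : ℤ := (S1.card : ℤ) with hN1
    set N2 : ℤ := (S2.card : ℤ) with hN2
    set N3 : ℤ := (S3.card : ℤ) with hN3
    set P1 : ℤ := ∑ t ∈ S1, (t : ℤ) with hP1
    set P2 : ℤ := ∑ t ∈ S2, (t : ℤ) with hP2
    set P3 : ℤ := ∑ t ∈ S3, (t : ℤ) with hP3
    set Q1 : ℤ := ∑ t ∈ S1, (t : ℤ) ^ 2 with hQ1
    set Q2 : ℤ := ∑ t ∈ S2, (t : ℤ) ^ 2 with hQ2
    set Q3 : ℤ := ∑ t ∈ S3, (t : ℤ) ^ 2 with hQ3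
    set D : ℤ := ∑ i ∈ S1, ∑ j ∈ S2, ∑ k ∈ S3,
      ((j : ℤ) - i) * ((k : ℤ) - i) * ((k : ℤ) - j) with hD
    have hpos : 0 < D := by
      apply Finset.sum_pos _ h1ne
      intro i hi
      apply Finset.sum_pos _ h2ne
      intro j hj
      apply Finset.sum_pos _ h3ne
      intro k hk
      have hij := h12 i hi j hj
      have hjk := h23 j hj k hk
      have e1 : (0:ℤ) < (j:ℤ) - i := by omega
      have e2 : (0:ℤ) < (k:ℤ) - i := by omega
      have e3 : (0:ℤ) < (k:ℤ) - j := by omega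
      positivity
    have hzero : D = 0 := by
      have step1 : D = ∑ i ∈ S1, ∑ j ∈ S2,
          (((i:ℤ) * N3 - P3) * (j:ℤ) ^ 2 + (Q3 - (i:ℤ) ^ 2 * N3) * (j:ℤ)
            + ((i:ℤ) ^ 2 * P3 - (i:ℤ) * Q3)) := by
        rw [hD]
        refine Finset.sum_congr rfl fun i _ => Finset.sum_congr rfl fun j _ => ?_
        calc (∑ k ∈ S3, ((j : ℤ) - i) * ((k : ℤ) - i) * ((k : ℤ) - j))
            = ∑ k ∈ S3, (((j:ℤ) - i) * (k:ℤ) ^ 2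
                + (-(((j:ℤ) - i) * ((i:ℤ) + j))) * (k:ℤ)
                + ((j:ℤ) - i) * i * j) :=
              Finset.sum_congr rfl fun k _ => by ring
          _ = ((j:ℤ) - i) * Q3 + (-(((j:ℤ) - i) * ((i:ℤ) + j))) * P3
                + ((j:ℤ) - i) * i * j * N3 := aux_poly S3 _ _ _
          _ = _ := by ring
      have step2 : D = ∑ i ∈ S1,
          ((P3 * N2 - N3 * P2) * (i:ℤ) ^ 2 + (N3 * Q2 - Q3 * N2) * (i:ℤ)
            + (Q3 * P2 - P3 * Q2)) := by
        rw [step1]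
        refine Finset.sum_congr rfl fun i _ => ?_
        calc (∑ j ∈ S2, (((i:ℤ) * N3 - P3) * (j:ℤ) ^ 2 + (Q3 - (i:ℤ) ^ 2 * N3) * (j:ℤ)
              + ((i:ℤ) ^ 2 * P3 - (i:ℤ) * Q3)))
            = ((i:ℤ) * N3 - P3) * Q2 + (Q3 - (i:ℤ) ^ 2 * N3) * P2
              + ((i:ℤ) ^ 2 * P3 - (i:ℤ) * Q3) * N2 := aux_poly S2 _ _ _
          _ = _ := by ring
      have step3 : D = (P3 * N2 - N3 * P2) * Q1 + (N3 * Q2 - Q3 * N2) * P1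
          + (Q3 * P2 - P3 * Q2) * N1 := by
        rw [step2]; exact aux_poly S1 _ _ _
      rw [step3]
      linear_combination (P1 * Q3 - P3 * Q1) * hcard + (N3 * Q1 - N1 * Q3) * hsum
        + (N1 * P3 - N3 * P1) * hsq
    omega
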